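/- arXiv:1707.02522 — 2 statements merged into one kernel-verified Lean document; each statement's English description precedes it below -/
import Mathlib

section
/- The coherence monotone C_max is faithful: for every state ρ, C_max(ρ) ≥ 0, and C_max(ρ) = 0 if and only if ρ is incoherent. -/
open scoped Matrix ComplexOrder

namespace OneShot

variable {ι κ : Type*} [Fintype ι] [DecidableEq ι] [Fintype κ] [DecidableEq κ]

/-- A quantum state: a positive semidefinite matrix with unit trace. -/
def IsState (ρ : Matrix ι ι ℂ) : Prop := ρ.PosSemidef ∧ ρ.trace = 1

/-- An incoherent state: a state that is diagonal in the computational basis. -/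
def IsIncoherent (ρ : Matrix ι ι ℂ) : Prop := IsState ρ ∧ ρ.IsDiag

/-- The completely dephasing channel `Δ`. -/
def dephase (ρ : Matrix ι ι ℂ) : Matrix ι ι ℂ := Matrix.diagonal fun i => ρ i i

/-- The max-relative entropy of coherence
`C_max(ρ) = min_{δ ∈ 𝓘} D_max(ρ‖δ) = log₂ min {λ ≥ 0 | ∃ δ ∈ 𝓘, ρ ≤ λ δ}`. -/
noncomputable def Cmax (ρ : Matrix ι ι ℂ) : ℝ :=
  Real.logb 2 (sInf {l : ℝ | 0 ≤ l ∧ ∃ δ, IsIncoherent δ ∧ (l • δ - ρ).PosSemidef})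

/-- `C_{Δ,max}(ρ) = log₂ min {λ ≥ 0 | ρ ≤ λ Δ(ρ)}`. -/
noncomputable def CDmax (ρ : Matrix ι ι ℂ) : ℝ :=
  Real.logb 2 (sInf {l : ℝ | 0 ≤ l ∧ (l • dephase ρ - ρ).PosSemidef})

/-- Complete positivity of a linear map on matrices. -/
def CompletelyPositive (Λ : Matrix ι ι ℂ →ₗ[ℂ] Matrix κ κ ℂ) : Prop :=
  ∀ (k : ℕ) (M : Matrix (Fin k × ι) (Fin k × ι) ℂ), M.PosSemidef →
    (Matrix.of fun p q : Fin k × κ =>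
      Λ (Matrix.of fun x y => M (p.1, x) (q.1, y)) p.2 q.2).PosSemidef

/-- Trace preservation. -/
def TracePreserving (Λ : Matrix ι ι ℂ →ₗ[ℂ] Matrix κ κ ℂ) : Prop :=
  ∀ A, (Λ A).trace = A.trace

/-- A maximally incoherent operation (MIO): a CPTP map sending every incoherent state
to an incoherent state. -/
def IsMIO (Λ : Matrix ι ι ℂ →ₗ[ℂ] Matrix κ κ ℂ) : Prop :=
  CompletelyPositive Λ ∧ TracePreserving Λ ∧ ∀ δ, IsIncoherent δ → IsIncoherent (Λ δ)

/-- A dephasing-covariant incoherent operation (DIO): a CPTP map commuting with `Δ`. -/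
def IsDIO (Λ : Matrix ι ι ℂ →ₗ[ℂ] Matrix ι ι ℂ) : Prop :=
  CompletelyPositive Λ ∧ TracePreserving Λ ∧ ∀ ρ, Λ (dephase ρ) = dephase (Λ ρ)

/-- An incoherent-preserving (Kraus) operator: `K δ Kᴴ` is a nonnegative multiple of an
incoherent state, for every incoherent state `δ`. -/
def IncoherentPreserving (K : Matrix κ ι ℂ) : Prop :=
  ∀ δ : Matrix ι ι ℂ, IsIncoherent δ →
    ∃ c : ℝ, 0 ≤ c ∧ ∃ δ' : Matrix κ κ ℂ, IsIncoherent δ' ∧ K * δ * Kᴴ = (c : ℂ) • δ'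

/-- An incoherent operation (IO). -/
def IsIO (Λ : Matrix ι ι ℂ →ₗ[ℂ] Matrix κ κ ℂ) : Prop :=
  ∃ (N : ℕ) (K : Fin N → Matrix κ ι ℂ),
    (∀ n, IncoherentPreserving (K n)) ∧ (∑ n, (K n)ᴴ * K n = 1) ∧
    ∀ ρ, Λ ρ = ∑ n, K n * ρ * (K n)ᴴ

/-- A strictly incoherent operation (SIO). -/
def IsSIO (Λ : Matrix ι ι ℂ →ₗ[ℂ] Matrix κ κ ℂ) : Prop :=
  ∃ (N : ℕ) (K : Fin N → Matrix κ ι ℂ),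
    (∀ n, IncoherentPreserving (K n)) ∧ (∀ n, IncoherentPreserving (K n)ᴴ) ∧
    (∑ n, (K n)ᴴ * K n = 1) ∧ ∀ ρ, Λ ρ = ∑ n, K n * ρ * (K n)ᴴ

/-- The outer product `|ψ⟩⟨ψ|`. -/
def outer (ψ : ι → ℂ) : Matrix ι ι ℂ := Matrix.of fun i j => ψ i * star (ψ j)

/-- `T ψ` is the number of nonzero computational-basis coefficients of `ψ`. -/
noncomputable def T (ψ : ι → ℂ) : ℕ := (Finset.univ.filter fun i => ψ i ≠ 0).card

/-- A finite pure-state decomposition `ρ = Σ_j p_j |ψ_j⟩⟨ψ_j|`. -/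
def IsDecomposition (ρ : Matrix ι ι ℂ) (n : ℕ) (p : Fin n → ℝ) (ψ : Fin n → ι → ℂ) : Prop :=
  (∀ j, 0 < p j) ∧ (∑ j, p j = 1) ∧ (∀ j, ∑ i, Complex.normSq (ψ j i) = 1) ∧
    ρ = ∑ j, p j • outer (ψ j)

/-- `C_0(ρ) = min over decompositions of max_j log₂ T(ψ_j)`. -/
noncomputable def C0 (ρ : Matrix ι ι ℂ) : ℝ :=
  sInf { r | ∃ n p ψ, IsDecomposition ρ n p ψ ∧
    r = Real.logb 2 (↑(Finset.univ.sup fun j => T (ψ j)) : ℝ) }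

/-- Matrix square root of a positive semidefinite matrix (junk value `0` elsewhere). -/
noncomputable def msqrt (A : Matrix ι ι ℂ) : Matrix ι ι ℂ :=
  letI := Classical.propDecidable A.PosSemidef
  if h : A.PosSemidef then
    (h.1.eigenvectorUnitary : Matrix ι ι ℂ) *
      Matrix.diagonal ((↑) ∘ Real.sqrt ∘ h.1.eigenvalues) *
      (star h.1.eigenvectorUnitary : Matrix ι ι ℂ)
  else 0

/-- Uhlmann fidelity `F(ρ,σ) = (Tr √(√ρ σ √ρ))²`. -/
noncomputable def Fid (ρ σ : Matrix ι ι ℂ) : ℝ :=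
  ((msqrt (msqrt ρ * σ * msqrt ρ)).trace.re) ^ 2

/-- Smoothed `C_max`. -/
noncomputable def Cmaxeps (ρ : Matrix ι ι ℂ) (ε : ℝ) : ℝ :=
  sInf { r | ∃ ρ', IsState ρ' ∧ 1 - ε ≤ Fid ρ ρ' ∧ r = Cmax ρ' }

/-- Smoothed `C_{Δ,max}`. -/
noncomputable def CDmaxeps (ρ : Matrix ι ι ℂ) (ε : ℝ) : ℝ :=
  sInf { r | ∃ ρ', IsState ρ' ∧ 1 - ε ≤ Fid ρ ρ' ∧ r = CDmax ρ' }

/-- Smoothed `C_0`. -/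
noncomputable def C0eps (ρ : Matrix ι ι ℂ) (ε : ℝ) : ℝ :=
  sInf { r | ∃ ρ', IsState ρ' ∧ 1 - ε ≤ Fid ρ ρ' ∧ r = C0 ρ' }

/-- The maximally coherent state `Ψ_M = |Ψ_M⟩⟨Ψ_M|` of dimension `M`. -/
noncomputable def PsiM (M : ℕ) : Matrix (Fin M) (Fin M) ℂ := Matrix.of fun _ _ => (1 : ℂ) / M

/-- One-shot coherence cost under MIO. -/
noncomputable def CMIOeps (ρ : Matrix ι ι ℂ) (ε : ℝ) : ℝ :=
  sInf { r | ∃ M : ℕ, 1 ≤ M ∧ r = Real.logb 2 M ∧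
    ∃ Λ : Matrix (Fin M) (Fin M) ℂ →ₗ[ℂ] Matrix ι ι ℂ, IsMIO Λ ∧ 1 - ε ≤ Fid ρ (Λ (PsiM M)) }

/-- One-shot coherence cost under DIO. -/
noncomputable def CDIOeps (ρ : Matrix ι ι ℂ) (ε : ℝ) : ℝ :=
  sInf { r | ∃ M : ℕ, 1 ≤ M ∧ r = Real.logb 2 M ∧
    ∃ Λ : Matrix (Fin M) (Fin M) ℂ →ₗ[ℂ] Matrix ι ι ℂ,
      CompletelyPositive Λ ∧ TracePreserving Λ ∧ (∀ ω, Λ (dephase ω) = dephase (Λ ω)) ∧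
      1 - ε ≤ Fid ρ (Λ (PsiM M)) }

/-- One-shot coherence cost under IO. -/
noncomputable def CIOeps (ρ : Matrix ι ι ℂ) (ε : ℝ) : ℝ :=
  sInf { r | ∃ M : ℕ, 1 ≤ M ∧ r = Real.logb 2 M ∧
    ∃ Λ : Matrix (Fin M) (Fin M) ℂ →ₗ[ℂ] Matrix ι ι ℂ, IsIO Λ ∧ 1 - ε ≤ Fid ρ (Λ (PsiM M)) }

/-- One-shot coherence cost under SIO. -/
noncomputable def CSIOeps (ρ : Matrix ι ι ℂ) (ε : ℝ) : ℝ :=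
  sInf { r | ∃ M : ℕ, 1 ≤ M ∧ r = Real.logb 2 M ∧
    ∃ Λ : Matrix (Fin M) (Fin M) ℂ →ₗ[ℂ] Matrix ι ι ℂ, IsSIO Λ ∧ 1 - ε ≤ Fid ρ (Λ (PsiM M)) }

/-- Matrix logarithm (base 2) via the spectral decomposition, with `log₂ 0 = 0` junk
convention on the kernel, and junk value `0` on non-Hermitian matrices. -/
noncomputable def mlog2 (A : Matrix ι ι ℂ) : Matrix ι ι ℂ :=
  letI := Classical.propDecidable A.IsHermitian
  if h : A.IsHermitian then
    (h.eigenvectorUnitary : Matrix ι ι ℂ) *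
      Matrix.diagonal (fun i => (Real.logb 2 (h.eigenvalues i) : ℂ)) *
      (h.eigenvectorUnitary : Matrix ι ι ℂ)ᴴ
  else 0

/-- The relative entropy of coherence `C_r(ρ) = min_{δ ∈ 𝓘} S(ρ‖δ)`, where the minimum
is (equivalently) restricted to those `δ` whose support contains the support of `ρ`,
on which `S(ρ‖δ) = Tr[ρ (log₂ ρ − log₂ δ)]` is finite. -/
noncomputable def Cr (ρ : Matrix ι ι ℂ) : ℝ :=
  sInf { r | ∃ δ, IsIncoherent δ ∧ (∀ v : ι → ℂ, δ.mulVec v = 0 → ρ.mulVec v = 0) ∧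
    r = ((ρ * (mlog2 ρ - mlog2 δ)).trace).re }

/-- Von Neumann entropy (base 2). -/
noncomputable def vN (σ : Matrix ι ι ℂ) : ℝ := -((σ * mlog2 σ).trace.re)

/-- The coherence of formation. -/
noncomputable def Cf (ρ : Matrix ι ι ℂ) : ℝ :=
  sInf { r | ∃ n p ψ, IsDecomposition ρ n p ψ ∧
    r = ∑ j, p j * vN (dephase (outer (ψ j))) }

/-- The set `A_ρ = { (1/t)[(1+t)Δ(ρ) − ρ] : t > 0, (1+t)Δ(ρ) − ρ ≥ 0 }`. -/
def Aset (ρ : Matrix ι ι ℂ) : Set (Matrix ι ι ℂ) :=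
  { σ | ∃ t : ℝ, 0 < t ∧ ((1 + t) • dephase ρ - ρ).PosSemidef ∧
      σ = t⁻¹ • ((1 + t) • dephase ρ - ρ) }

/-- The `n`-fold tensor power `ρ^{⊗ n}`. -/
def tpow (ρ : Matrix ι ι ℂ) (n : ℕ) : Matrix (Fin n → ι) (Fin n → ι) ℂ :=
  Matrix.of fun i j => ∏ t, ρ (i t) (j t)


lemma diag_nn {n : Type*} [Fintype n] [DecidableEq n] {M : Matrix n n ℂ} (hM : M.PosSemidef)
    (i : n) : 0 ≤ M i i := by
  have := hM.dotProduct_mulVec_nonneg (Pi.single i 1)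
  simpa [dotProduct, Pi.single_apply, Matrix.mulVec, Finset.sum_ite_eq] using this

lemma offdiag_bound {n : Type*} [Fintype n] [DecidableEq n] {M : Matrix n n ℂ} (hM : M.PosSemidef)
    {i j : n} (hij : i ≠ j) :
    2 * ‖M i j‖ ≤ (M i i).re + (M j j).re := by
  have hi := (Complex.le_def.mp (diag_nn hM i)).1
  have hj := (Complex.le_def.mp (diag_nn hM j)).1
  simp only [Complex.zero_re] at hi hj
  by_cases h0 : M i j = 0
  · rw [h0]; simp; positivity
  · set z : ℂ := -(starRingEnd ℂ) (M i j) / ‖M i j‖ with hz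
    have habs : (‖M i j‖ : ℝ) ≠ 0 := by simpa using h0
    have hq := hM.dotProduct_mulVec_nonneg (Pi.single i 1 + Pi.single j z)
    have hherm : M j i = (starRingEnd ℂ) (M i j) := by
      conv_lhs => rw [← hM.1]
      rfl
    have hexp : star (Pi.single i 1 + Pi.single j z) ⬝ᵥ (M *ᵥ (Pi.single i 1 + Pi.single j z)) =
        M i i + z * M i j + (starRingEnd ℂ) z * M j i + (starRingEnd ℂ) z * z * M j j := by
      simp only [star_add, add_dotProduct, Matrix.mulVec_add, dotProduct_add,
        ← Pi.single_star, Matrix.mulVec_single, single_dotProduct, star_one, starRingEnd_apply,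
        Pi.smul_apply, op_smul_eq_mul, Matrix.col_apply]
      ring
    rw [hexp] at hq
    have hz1 : z * M i j = -(‖M i j‖ : ℂ) := by
      rw [hz]
      field_simp
      rw [mul_comm, Complex.mul_conj, Complex.normSq_eq_norm_sq]
      push_cast; ring
    have hz2 : (starRingEnd ℂ) z * M j i = -(‖M i j‖ : ℂ) := by
      rw [hherm, ← map_mul, hz1]
      simp
    have hz3 : (starRingEnd ℂ) z * z = 1 := by
      rw [hz]
      rw [map_div₀, map_neg, Complex.conj_conj]
      simp only [Complex.conj_ofReal]
      field_simp
      rw [Complex.mul_conj, Complex.normSq_eq_norm_sq]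
      push_cast; ring
    rw [hz1, hz2, hz3, one_mul] at hq
    have := (Complex.le_def.mp hq).1
    simp only [Complex.zero_re, Complex.add_re, Complex.neg_re, Complex.ofReal_re] at this
    linarith


lemma one_sub_psd {n : Type*} [Fintype n] [DecidableEq n] {ρ : Matrix n n ℂ}
    (hpsd : ρ.PosSemidef) (htr : ρ.trace = 1) : (1 - ρ).PosSemidef := by
  have h := hpsd.1
  have hspec := h.spectral_theorem
  simp only [Unitary.conjStarAlgAut_apply, Unitary.coe_star] at hspec
  set U : Matrix n n ℂ := (h.eigenvectorUnitary : Matrix n n ℂ) with hU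
  have hUU : U * Uᴴ = 1 := by
    simpa [hU, Matrix.star_eq_conjTranspose] using h.eigenvectorUnitary.2.2
  have htr' : ∑ i, h.eigenvalues i = 1 := by
    have : ρ.trace = ∑ i, (h.eigenvalues i : ℂ) := by
      conv_lhs => rw [hspec]
      rw [Matrix.trace_mul_cycle]
      have : star U * U = 1 := h.eigenvectorUnitary.2.1
      rw [this, one_mul, Matrix.trace_diagonal]
      simp
    rw [htr] at this
    have := this.symm
    rw [← Complex.ofReal_sum] at this
    exact_mod_cast this
  have hle : ∀ i, h.eigenvalues i ≤ 1 := by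
    intro i
    calc h.eigenvalues i ≤ ∑ j, h.eigenvalues j :=
      Finset.single_le_sum (fun j _ => hpsd.eigenvalues_nonneg j) (Finset.mem_univ i)
    _ = 1 := htr'
  have hdiagpsd : (Matrix.diagonal (fun i => (1 : ℂ) - (h.eigenvalues i : ℂ))).PosSemidef := by
    apply Matrix.PosSemidef.diagonal
    intro i
    rw [Complex.le_def]
    constructor
    · simp [hpsd.eigenvalues_nonneg, hle i]
    · simp
  have key : 1 - ρ = U * Matrix.diagonal (fun i => (1 : ℂ) - (h.eigenvalues i : ℂ)) * Uᴴ := by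
    have hd : Matrix.diagonal (fun i => (1 : ℂ) - (h.eigenvalues i : ℂ))
        = 1 - Matrix.diagonal (RCLike.ofReal ∘ h.eigenvalues) := by
      rw [← Matrix.diagonal_one, Matrix.diagonal_sub]
      rfl
    rw [hd, Matrix.mul_sub, Matrix.sub_mul, mul_one, hUU]
    rw [show Uᴴ = star U from rfl, ← hspec]
  rw [key]
  exact hdiagpsd.mul_mul_conjTranspose_same U

/-- the coherence monotone `C_max` is faithful: for every state `ρ`,
`C_max(ρ) ≥ 0`, and `C_max(ρ) = 0` iff `ρ` is incoherent. -/
theorem Cmax_faithful {d : ℕ} (hd : 1 ≤ d) (ρ : Matrix (Fin d) (Fin d) ℂ) (hρ : IsState ρ) :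
    0 ≤ Cmax ρ ∧ (Cmax ρ = 0 ↔ IsIncoherent ρ) := by
  classical
  set S : Set ℝ := {l : ℝ | 0 ≤ l ∧ ∃ δ, IsIncoherent δ ∧ (l • δ - ρ).PosSemidef} with hS
  -- the uniform incoherent state
  have hd0 : (d : ℂ) ≠ 0 := by
    exact_mod_cast Nat.cast_ne_zero.mpr (by omega)
  have huinc : IsIncoherent ((d : ℂ)⁻¹ • (1 : Matrix (Fin d) (Fin d) ℂ)) := by
    refine ⟨⟨?_, ?_⟩, ?_⟩
    · rw [show ((d : ℂ)⁻¹ • (1 : Matrix (Fin d) (Fin d) ℂ))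
          = Matrix.diagonal (fun _ => (d : ℂ)⁻¹) from by
        ext a b
        by_cases hab : a = b <;> simp [hab, Matrix.one_apply, Matrix.diagonal_apply]]
      apply Matrix.PosSemidef.diagonal
      intro i
      show (0 : ℂ) ≤ (d : ℂ)⁻¹
      rw [show ((d : ℂ)⁻¹ : ℂ) = (((d : ℝ)⁻¹ : ℝ) : ℂ) by push_cast; ring]
      rw [Complex.zero_le_real]
      positivity
    · rw [Matrix.trace_smul, Matrix.trace_one]
      simp only [smul_eq_mul, Fintype.card_fin]
      field_simp
    · intro i j hij
      simp [Matrix.one_apply, hij]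
  have hmemd : (d : ℝ) ∈ S := by
    refine ⟨by positivity, (d : ℂ)⁻¹ • (1 : Matrix (Fin d) (Fin d) ℂ), huinc, ?_⟩
    have : (d : ℝ) • ((d : ℂ)⁻¹ • (1 : Matrix (Fin d) (Fin d) ℂ)) = 1 := by
      ext a b
      by_cases hab : a = b <;>
        simp [hab, Matrix.one_apply, Complex.real_smul, Matrix.smul_apply, hd0]
    rw [this]
    exact one_sub_psd hρ.1 hρ.2
  have hne : S.Nonempty := ⟨(d : ℝ), hmemd⟩
  -- lower bound : every element of S is ≥ 1
  have hlb : ∀ l ∈ S, (1 : ℝ) ≤ l := by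
    rintro l ⟨hl0, δ, hδ, hpsd⟩
    have htr : (l • δ - ρ).trace = ((l - 1 : ℝ) : ℂ) := by
      rw [Matrix.trace_sub, Matrix.trace_smul, hδ.1.2, hρ.2]
      push_cast
      simp [Complex.real_smul]
    have h0 : (0 : ℂ) ≤ (l • δ - ρ).trace := by
      rw [Matrix.trace]
      apply Finset.sum_nonneg
      intro i _
      exact diag_nn hpsd i
    rw [htr, Complex.le_def] at h0
    simp only [Complex.zero_re, Complex.ofReal_re] at h0
    linarith [h0.1]
  have hbdd : BddBelow S := ⟨1, hlb⟩
  have hinf1 : (1 : ℝ) ≤ sInf S := le_csInf hne hlb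
  have hCmax : Cmax ρ = Real.logb 2 (sInf S) := rfl
  constructor
  · rw [hCmax]
    exact Real.logb_nonneg (by norm_num) hinf1
  constructor
  · -- Cmax ρ = 0 → IsIncoherent ρ
    intro h0
    have hinf : sInf S = 1 := by
      rcases lt_or_eq_of_le hinf1 with h | h
      · exfalso
        have := Real.logb_pos (by norm_num : (1:ℝ) < 2) h
        rw [← hCmax, h0] at this
        exact lt_irrefl 0 this
      · exact h.symm
    have hdiag : ρ.IsDiag := by
      intro i j hij
      have key : ∀ ε : ℝ, 0 < ε → ‖ρ i j‖ ≤ 0 + ε := by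
        intro ε hε
        obtain ⟨l, hlS, hlt⟩ := exists_lt_of_csInf_lt hne (by rw [hinf]; linarith : sInf S < 1 + ε)
        obtain ⟨hl0, δ, hδ, hpsd⟩ := hlS
        set M := l • δ - ρ with hM
        have hMij : M i j = -ρ i j := by
          rw [hM]
          simp [Matrix.sub_apply, Matrix.smul_apply, hδ.2 hij]
        have hbound := offdiag_bound hpsd hij
        -- diagonal entries sum bound
        have hdsum : (M i i).re + (M j j).re ≤ l - 1 := by
          have htr : ∑ k, (M k k).re = l - 1 := by
            have : M.trace = ((l - 1 : ℝ) : ℂ) := by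
              rw [hM, Matrix.trace_sub, Matrix.trace_smul, hδ.1.2, hρ.2]
              push_cast
              simp [Complex.real_smul]
            have := congrArg Complex.re this
            simpa [Matrix.trace, Complex.ofReal_re] using this
          rw [← htr]
          calc (M i i).re + (M j j).re
              = ∑ k ∈ ({i, j} : Finset (Fin d)), (M k k).re := (Finset.sum_pair (f := fun k => (M k k).re) hij).symm
            _ ≤ ∑ k, (M k k).re :=
              Finset.sum_le_sum_of_subset_of_nonneg
                (fun k _ => Finset.mem_univ k)
                (fun k _ _ => (Complex.le_def.mp (diag_nn hpsd k)).1)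
        rw [hMij] at hbound
        simp only [map_neg, norm_neg] at hbound
        have : 2 * ‖ρ i j‖ ≤ l - 1 := by
          calc 2 * ‖ρ i j‖ = 2 * ‖M i j‖ := by rw [hMij]; simp
          _ ≤ (M i i).re + (M j j).re := offdiag_bound hpsd hij
          _ ≤ l - 1 := hdsum
        have habs0 : 0 ≤ ‖ρ i j‖ := norm_nonneg _
        linarith
      have h1 : ‖ρ i j‖ ≤ 0 := le_of_forall_pos_le_add key
      have : ‖ρ i j‖ = 0 :=
        le_antisymm h1 (norm_nonneg _)
      exact norm_eq_zero.mp this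
    exact ⟨hρ, hdiag⟩
  · -- IsIncoherent ρ → Cmax ρ = 0
    intro hinc
    have h1S : (1 : ℝ) ∈ S := by
      refine ⟨zero_le_one, ρ, hinc, ?_⟩
      rw [one_smul, sub_self]
      exact Matrix.PosSemidef.zero
    have : sInf S = 1 := le_antisymm (csInf_le hbdd h1S) hinf1
    rw [hCmax, this, Real.logb_one]


end OneShot
end

section
/- C_0 is monotone under incoherent operations: if Λ(ρ) = Σ_n K_n ρ K_n† is a completely positive trace-preserving map whose Kraus operators K_n are all incoherent-preserving, then for every state ρ one has C_0(Λ(ρ)) ≤ C_0(ρ). -/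
open scoped Matrix ComplexOrder

namespace OneShot

variable {ι κ : Type*} [Fintype ι] [DecidableEq ι] [Fintype κ] [DecidableEq κ]

/-! ### Auxiliary lemmas for Statement 7 -/

lemma mul_outer_mul (K : Matrix κ ι ℂ) (ψ : ι → ℂ) :
    K * outer ψ * Kᴴ = outer (K.mulVec ψ) := by
  ext a b
  simp only [outer, Matrix.mul_apply, Matrix.conjTranspose_apply, Matrix.of_apply,
    Matrix.mulVec, dotProduct, star_sum, Finset.sum_mul, Finset.mul_sum, star_mul']
  exact Finset.sum_congr rfl fun j _ => Finset.sum_congr rfl fun i _ => by ring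

lemma outer_real_smul (r : ℝ) (w : κ → ℂ) :
    outer (fun k => (r : ℂ) * w k) = (r * r) • outer w := by
  ext i j
  simp only [outer, Matrix.of_apply, Matrix.smul_apply, star_mul', Complex.star_def,
    Complex.conj_ofReal, Complex.real_smul, Complex.ofReal_mul]
  ring

lemma outer_eq_zero_of_normSq (w : κ → ℂ) (h : ∑ k, Complex.normSq (w k) = 0) :
    outer w = 0 := by
  have hw : ∀ k, w k = 0 := by
    intro k
    have := (Finset.sum_eq_zero_iff_of_nonneg
      (fun i _ => Complex.normSq_nonneg (w i))).1 h k (Finset.mem_univ k)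
    exact Complex.normSq_eq_zero.1 this
  ext i j
  simp [outer, hw]

lemma T_smul_eq {r : ℂ} (hr : r ≠ 0) (w : κ → ℂ) :
    T (fun k => r * w k) = T w := by
  unfold T
  congr 1
  apply Finset.filter_congr
  intro k _
  simp [hr]

/-- An incoherent-preserving operator has at most one nonzero entry in each column. -/
lemma IncoherentPreserving.eq_of_ne_zero {K : Matrix κ ι ℂ} (hK : IncoherentPreserving K)
    {i : ι} {a b : κ} (ha : K a i ≠ 0) (hb : K b i ≠ 0) : a = b := by
  by_contra hab
  set e : ι → ℂ := fun j => if j = i then 1 else 0 with he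
  have hinc : IsIncoherent (Matrix.diagonal e) := by
    refine ⟨⟨Matrix.posSemidef_diagonal_iff.2 fun j => ?_, ?_⟩, Matrix.isDiag_diagonal e⟩
    · by_cases h : j = i <;> simp [he, h]
    · simp [Matrix.trace_diagonal, he]
  obtain ⟨c, _, δ', ⟨_, hdiag⟩, heq⟩ := hK (Matrix.diagonal e) hinc
  have h1 : (K * Matrix.diagonal e * Kᴴ) a b = K a i * star (K b i) := by
    rw [Matrix.mul_apply, Finset.sum_eq_single i]
    · rw [Matrix.mul_diagonal]; simp [he, Matrix.conjTranspose_apply]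
    · intro j _ hj
      rw [Matrix.mul_diagonal]
      simp [he, hj]
    · intro h; exact absurd (Finset.mem_univ i) h
  have h2 : (K * Matrix.diagonal e * Kᴴ) a b = 0 := by
    rw [heq, Matrix.smul_apply, hdiag hab, smul_zero]
  rw [h1] at h2
  exact (mul_ne_zero ha (star_ne_zero.2 hb)) h2

lemma T_mulVec_le {K : Matrix κ ι ℂ} (hK : IncoherentPreserving K) (ψ : ι → ℂ) :
    T (K.mulVec ψ) ≤ T ψ := by
  classical
  rcases isEmpty_or_nonempty κ with h | h
  · simp [T, Finset.univ_eq_empty]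
  · inhabit κ
    set f : ι → κ := fun i =>
      if h : ∃ k, K k i ≠ 0 then h.choose else default with hf
    have hsub : (Finset.univ.filter fun k => K.mulVec ψ k ≠ 0) ⊆
        (Finset.univ.filter fun i => ψ i ≠ 0).image f := by
      intro k hk
      have hk' : K.mulVec ψ k ≠ 0 := (Finset.mem_filter.1 hk).2
      obtain ⟨i, _, hi⟩ := Finset.exists_ne_zero_of_sum_ne_zero hk'
      have hKi : K k i ≠ 0 := fun h0 => hi (by simp [h0])
      have hψi : ψ i ≠ 0 := fun h0 => hi (by simp [h0])
      have hex : ∃ k', K k' i ≠ 0 := ⟨k, hKi⟩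
      have : f i = k := by
        rw [hf]; simp only [dif_pos hex]
        exact hK.eq_of_ne_zero hex.choose_spec hKi
      exact Finset.mem_image.2 ⟨i, Finset.mem_filter.2 ⟨Finset.mem_univ i, hψi⟩, this⟩
    calc T (K.mulVec ψ) ≤ _ := Finset.card_le_card hsub
      _ ≤ T ψ := Finset.card_image_le

/-- Pruning a nonnegative rank-one representation to a genuine decomposition. -/
lemma exists_decomposition_of_rep {α : Type*} [Fintype α] {ρ : Matrix κ κ ℂ}
    (q : α → ℝ) (φ : α → κ → ℂ) (hq : ∀ j, 0 ≤ q j) (hs : ∑ j, q j = 1)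
    (hn : ∀ j, q j ≠ 0 → ∑ i, Complex.normSq (φ j i) = 1)
    (hρ : ρ = ∑ j, (q j) • outer (φ j)) (B : ℕ) (hT : ∀ j, q j ≠ 0 → T (φ j) ≤ B) :
    ∃ n p ψ, IsDecomposition ρ n p ψ ∧ (Finset.univ.sup fun j => T (ψ j)) ≤ B := by
  classical
  set s : Finset α := Finset.univ.filter (fun j => q j ≠ 0) with hsdef
  have hmem : ∀ x : s, q (x : α) ≠ 0 := fun x => (Finset.mem_filter.1 x.2).2
  set e : Fin s.card ≃ s := s.equivFin.symm with hedef
  refine ⟨s.card, fun j => q (e j), fun j => φ (e j), ⟨?_, ?_, ?_, ?_⟩, ?_⟩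
  · exact fun j => lt_of_le_of_ne (hq _) (Ne.symm (hmem (e j)))
  · rw [Equiv.sum_comp e (fun x : s => q (x : α)), Finset.sum_coe_sort s q, hsdef,
      Finset.sum_filter_of_ne (fun x _ h => h), hs]
  · exact fun j => hn _ (hmem (e j))
  · rw [hρ, ← Finset.sum_filter_of_ne (p := fun j => q j ≠ 0)
      (fun x _ h => fun h0 => h (by simp [h0])), ← hsdef,
      ← Finset.sum_coe_sort s (fun j => q j • outer (φ j)),
      ← Equiv.sum_comp e (fun x : s => q (x : α) • outer (φ (x : α)))]
  · exact Finset.sup_le fun j _ => hT _ (hmem (e j))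

lemma sum_normSq_eq_one_dot {v : κ → ℂ} :
    ((∑ k, Complex.normSq (v k) : ℝ) : ℂ) = dotProduct (star v) v := by
  rw [Complex.ofReal_sum]
  exact Finset.sum_congr rfl fun k _ => by
    rw [Complex.normSq_eq_conj_mul_self]; rfl

/-- Kraus operators of a channel preserve the total weight. -/
lemma sum_normSq_mulVec {N : ℕ} (K : Fin N → Matrix κ ι ℂ)
    (hsum : ∑ n, (K n)ᴴ * K n = 1) (ψ : ι → ℂ) :
    ∑ m, ∑ k, Complex.normSq ((K m).mulVec ψ k) = ∑ i, Complex.normSq (ψ i) := by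
  have key : ∀ m, ((∑ k, Complex.normSq ((K m).mulVec ψ k) : ℝ) : ℂ)
      = dotProduct (star ψ) (((K m)ᴴ * K m).mulVec ψ) := by
    intro m
    rw [sum_normSq_eq_one_dot, ← Matrix.mulVec_mulVec, Matrix.star_mulVec,
      ← Matrix.dotProduct_mulVec]
  have : ((∑ m, ∑ k, Complex.normSq ((K m).mulVec ψ k) : ℝ) : ℂ)
      = ((∑ i, Complex.normSq (ψ i) : ℝ) : ℂ) := by
    rw [Complex.ofReal_sum]
    calc ∑ m, ((∑ k, Complex.normSq ((K m).mulVec ψ k) : ℝ) : ℂ)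
        = ∑ m, dotProduct (star ψ) (((K m)ᴴ * K m).mulVec ψ) :=
          Finset.sum_congr rfl fun m _ => key m
      _ = dotProduct (star ψ) ((∑ m, (K m)ᴴ * K m).mulVec ψ) := by
          simp only [dotProduct, Matrix.mulVec, Matrix.sum_apply, Finset.sum_mul,
            Finset.mul_sum]
          rw [Finset.sum_comm]
          refine Finset.sum_congr rfl fun k _ => ?_
          rw [Finset.sum_comm]
      _ = dotProduct (star ψ) ψ := by rw [hsum, Matrix.one_mulVec]
      _ = _ := sum_normSq_eq_one_dot.symm
  exact_mod_cast this

lemma one_le_sup_T {ρ : Matrix κ κ ℂ} {n : ℕ} {p : Fin n → ℝ} {ψ : Fin n → κ → ℂ}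
    (h : IsDecomposition ρ n p ψ) :
    (1 : ℕ) ≤ Finset.univ.sup fun j => T (ψ j) := by
  obtain ⟨hp, hs, hn, -⟩ := h
  have hn0 : n ≠ 0 := by
    rintro rfl
    simp at hs
  have j0 : Fin n := ⟨0, Nat.pos_of_ne_zero hn0⟩
  have hex : ∃ i, ψ j0 i ≠ 0 := by
    by_contra h0
    push_neg at h0
    have := hn j0
    simp [h0] at this
  obtain ⟨i, hi⟩ := hex
  have hT1 : 1 ≤ T (ψ j0) := by
    have hne : (Finset.univ.filter fun i => ψ j0 i ≠ 0).Nonempty :=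
      ⟨i, Finset.mem_filter.2 ⟨Finset.mem_univ i, hi⟩⟩
    simpa [T] using Finset.card_pos.2 hne
  exact le_trans hT1 (Finset.le_sup (f := fun j => T (ψ j)) (Finset.mem_univ j0))

lemma C0_set_nonneg {σ : Matrix κ κ ℂ} {r : ℝ}
    (hr : r ∈ { r | ∃ n p ψ, IsDecomposition σ n p ψ ∧
      r = Real.logb 2 (↑(Finset.univ.sup fun j => T (ψ j)) : ℝ) }) : 0 ≤ r := by
  obtain ⟨n, p, ψ, hd, rfl⟩ := hr
  exact Real.logb_nonneg one_lt_two (by exact_mod_cast one_le_sup_T hd)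

/-- Spectral decomposition: every state admits a pure-state decomposition. -/
lemma IsState.exists_decomposition {ρ : Matrix ι ι ℂ} (hρ : IsState ρ) :
    ∃ n p ψ, IsDecomposition ρ n p ψ := by
  classical
  obtain ⟨hpsd, htr⟩ := hρ
  have hH : ρ.IsHermitian := hpsd.1
  set U : Matrix ι ι ℂ := (hH.eigenvectorUnitary : Matrix ι ι ℂ) with hU
  have hUstar : star U * U = 1 := hH.eigenvectorUnitary.2.1
  have hspec := hH.spectral_theorem
  have hrep : ρ = ∑ i, (hH.eigenvalues i) • outer (fun a => U a i) := by
    conv_lhs => rw [hspec, Unitary.conjStarAlgAut_apply]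
    ext a b
    rw [Matrix.mul_apply]
    simp only [Matrix.sum_apply, Matrix.smul_apply]
    refine Finset.sum_congr rfl fun j _ => ?_
    rw [Matrix.mul_diagonal]
    simp only [outer, Matrix.of_apply, Matrix.star_apply, Function.comp_apply,
      Complex.real_smul, RCLike.ofReal_alg, smul_eq_mul, hU]
    ring
  have hcols : ∀ i, ∑ a, Complex.normSq (U a i) = 1 := by
    intro i
    have h1 : (star U * U) i i = 1 := by rw [hUstar]; simp
    have : ((∑ a, Complex.normSq (U a i) : ℝ) : ℂ) = (1 : ℂ) := by
      rw [← h1, Matrix.mul_apply, Complex.ofReal_sum]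
      refine Finset.sum_congr rfl fun a _ => ?_
      rw [Complex.normSq_eq_conj_mul_self]
      rfl
    exact_mod_cast this
  have hsum1 : ∑ i, hH.eigenvalues i = 1 := by
    have h2 : ρ.trace = ∑ i, ((hH.eigenvalues i : ℝ) : ℂ) := by
      conv_lhs => rw [hspec, Unitary.conjStarAlgAut_apply]
      rw [Matrix.trace_mul_cycle,
        show star (hH.eigenvectorUnitary : Matrix ι ι ℂ) *
          (hH.eigenvectorUnitary : Matrix ι ι ℂ) = 1 from hUstar, one_mul,
        Matrix.trace_diagonal]
      rfl
    rw [htr] at h2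
    have := h2.symm
    rw [← Complex.ofReal_sum] at this
    exact_mod_cast this
  obtain ⟨n, p, ψ, hd, -⟩ := exists_decomposition_of_rep (α := ι)
    hH.eigenvalues (fun i a => U a i) (fun i => hpsd.eigenvalues_nonneg i) hsum1
    (fun i _ => hcols i) hrep (Fintype.card ι)
    (fun i _ => Finset.card_filter_le _ _)
  exact ⟨n, p, ψ, hd⟩

/-- `C_0` is monotone under incoherent operations. -/
theorem C0_IO_monotone {d : ℕ} (N : ℕ) (K : Fin N → Matrix (Fin d) (Fin d) ℂ)
    (hK : ∀ n, IncoherentPreserving (K n)) (hsum : ∑ n, (K n)ᴴ * K n = 1)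
    (ρ : Matrix (Fin d) (Fin d) ℂ) (hρ : IsState ρ) :
    C0 (∑ n, K n * ρ * (K n)ᴴ) ≤ C0 ρ := by
  classical
  obtain ⟨n₀, p₀, ψ₀, hd₀⟩ := hρ.exists_decomposition
  unfold C0
  refine le_csInf ⟨_, n₀, p₀, ψ₀, hd₀, rfl⟩ ?_
  rintro r ⟨n, p, ψ, hdec, rfl⟩
  obtain ⟨hp, hps, hpn, hrep⟩ := hdec
  set B : ℕ := Finset.univ.sup fun j => T (ψ j) with hB
  -- the raw rank-one representation of the output state
  set w : Fin N × Fin n → Fin d → ℂ := fun x => (K x.1).mulVec (ψ x.2) with hw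
  set c : Fin N × Fin n → ℝ := fun x => ∑ k, Complex.normSq (w x k) with hc
  set q : Fin N × Fin n → ℝ := fun x => p x.2 * c x with hqd
  set φ : Fin N × Fin n → Fin d → ℂ :=
    fun x k => (((Real.sqrt (c x))⁻¹ : ℝ) : ℂ) * w x k with hφ
  have hcnn : ∀ x, 0 ≤ c x := fun x => Finset.sum_nonneg fun k _ => Complex.normSq_nonneg _
  have hqnn : ∀ x, 0 ≤ q x := fun x => mul_nonneg (hp x.2).le (hcnn x)
  have hqs : ∑ x, q x = 1 := by
    rw [Fintype.sum_prod_type_right]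
    calc ∑ j, ∑ m, q (m, j) = ∑ j, p j * ∑ m, c (m, j) := by
          refine Finset.sum_congr rfl fun j _ => ?_
          rw [Finset.mul_sum]
        _ = ∑ j, p j := by
          refine Finset.sum_congr rfl fun j _ => ?_
          have hcj : ∑ m, c (m, j) = 1 := by
            simp only [hc, hw]
            rw [sum_normSq_mulVec K hsum (ψ j), hpn j]
          rw [hcj, mul_one]
        _ = 1 := hps
  have hqn : ∀ x, q x ≠ 0 → ∑ i, Complex.normSq (φ x i) = 1 := by
    intro x hx
    have hcx : c x ≠ 0 := fun h0 => hx (by rw [hqd]; simp [h0])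
    have hcpos : 0 < c x := lt_of_le_of_ne (hcnn x) (Ne.symm hcx)
    have : ∀ i, Complex.normSq (φ x i) = (c x)⁻¹ * Complex.normSq (w x i) := by
      intro i
      simp only [hφ]
      rw [Complex.normSq_mul, Complex.normSq_ofReal]
      congr 1
      rw [← mul_inv, Real.mul_self_sqrt (hcnn x)]
    simp only [this]
    rw [← Finset.mul_sum,
      show ∑ i, Complex.normSq (w x i) = c x from rfl, inv_mul_cancel₀ hcx]
  have hkey : ∀ x : Fin N × Fin n, q x • outer (φ x) = p x.2 • outer (w x) := by
    intro x
    by_cases hcx : c x = 0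
    · have hz : outer (w x) = 0 := outer_eq_zero_of_normSq _ hcx
      have hz' : outer (φ x) = 0 := by
        simp only [hφ]
        rw [outer_real_smul, hz, smul_zero]
      rw [hz, hz', smul_zero, smul_zero]
    · simp only [hφ, hqd]
      rw [outer_real_smul, smul_smul]
      congr 1
      rw [← Real.sqrt_inv, Real.mul_self_sqrt (inv_nonneg.2 (hcnn x))]
      field_simp [hcx]
  have hout : (∑ m, K m * ρ * (K m)ᴴ) = ∑ x, q x • outer (φ x) := by
    calc (∑ m, K m * ρ * (K m)ᴴ)
        = ∑ m, ∑ j, p j • outer ((K m).mulVec (ψ j)) := by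
          refine Finset.sum_congr rfl fun m _ => ?_
          rw [hrep, Finset.mul_sum, Finset.sum_mul]
          refine Finset.sum_congr rfl fun j _ => ?_
          rw [Matrix.mul_smul, Matrix.smul_mul, mul_outer_mul]
      _ = ∑ x : Fin N × Fin n, p x.2 • outer (w x) := by
          rw [Fintype.sum_prod_type]
      _ = ∑ x, q x • outer (φ x) := by
          exact (Finset.sum_congr rfl fun x _ => (hkey x).symm)
  have hTb : ∀ x, q x ≠ 0 → T (φ x) ≤ B := by
    intro x hx
    have hcx : c x ≠ 0 := fun h0 => hx (by rw [hqd]; simp [h0])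
    have hr0 : (((Real.sqrt (c x))⁻¹ : ℝ) : ℂ) ≠ 0 := by
      have h1 : Real.sqrt (c x) ≠ 0 := by
        rw [Real.sqrt_ne_zero' ]
        exact lt_of_le_of_ne (hcnn x) (Ne.symm hcx)
      exact Complex.ofReal_ne_zero.2 (inv_ne_zero h1)
    calc T (φ x) = T (w x) := T_smul_eq hr0 (w x)
      _ ≤ T (ψ x.2) := T_mulVec_le (hK x.1) (ψ x.2)
      _ ≤ B := Finset.le_sup (f := fun j => T (ψ j)) (Finset.mem_univ x.2)
  obtain ⟨n', p', ψ', hdec', hsup'⟩ :=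
    exists_decomposition_of_rep q φ hqnn hqs hqn hout B hTb
  refine csInf_le_of_le ⟨0, fun r hr => C0_set_nonneg hr⟩
    ⟨n', p', ψ', hdec', rfl⟩ ?_
  have h1 : (1 : ℕ) ≤ Finset.univ.sup fun j => T (ψ' j) := one_le_sup_T hdec'
  refine Real.logb_le_logb_of_le one_lt_two ?_ ?_
  · exact_mod_cast Nat.lt_of_lt_of_le Nat.zero_lt_one h1
  · exact_mod_cast hsup'

end OneShot
end
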